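/- Let n ≥ 3, 2 ≤ i_1 ≤ n−2, n − i_2 ≤ t_2 ≤ i_1 − 1 (so i_2 + t_2 > n and n − t_2 ≤ i_2 ≤ n−2). Define C_1 = ... = C_{n−i_2−1} = [n] \ ({t_2+1,...,n} ∪ {1,...,i_2+t_2−n}), C_{n−i_2} = ... = C_{i_1} = C_n = [n], C_{i_1+1} = ... = C_{n−1} = [n] \ [i_1]. Then {Σ_{k=1}^n e_{j_k} : j_k ∈ C_k} = {α ∈ ℕ^n : |α| = n, α_1 + ... + α_{i_1} ≤ i_1 + 1, Σ_{k=1}^{i_2+t_2−n} α_k + Σ_{k=t_2+1}^{n} α_k ≤ i_2 + 1}. -/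

import Mathlib

lemma aux_sum_toList {β M : Type*} [AddCommMonoid M] (s : Finset β) (f : β → M) :
    (s.toList.map f).sum = ∑ x ∈ s, f x := by
  rw [Finset.sum]
  have h : ((s.toList.map f : List M) : Multiset M) = Multiset.map f s.val := by
    rw [← Multiset.map_coe, Finset.coe_toList]
  rw [← Multiset.sum_coe, h]

lemma aux_sum_map_ite {n : ℕ} (m : Fin n) (l : List (Fin n)) :
    (l.map (fun x => if m = x then (1:ℕ) else 0)).sum = l.count m := by
  induction l with
  | nil => simp
  | cons a t ih =>
    simp only [List.map_cons, List.sum_cons, ih, List.count_cons, beq_iff_eq]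
    rcases eq_or_ne m a with h | h
    · simp [h]
      omega
    · simp [h, Ne.symm h]

lemma aux_count_flatMap {n : ℕ} (α : Fin n → ℕ) (m : Fin n) :
    ∀ (e : List (Fin n)), e.Nodup →
    (e.flatMap fun x => List.replicate (α x) x).count m = if m ∈ e then α m else 0 := by
  intro e he
  induction e with
  | nil => simp
  | cons a t ih =>
    rw [List.nodup_cons] at he
    rw [List.flatMap_cons, List.count_append, List.count_replicate, ih he.2]
    rcases eq_or_ne m a with h | h
    · subst h
      simp [he.1]
    · simp [h, Ne.symm h]

lemma aux_len_flatMap {n : ℕ} (α : Fin n → ℕ) (F : Finset (Fin n)) :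
    (F.toList.flatMap fun x => List.replicate (α x) x).length = ∑ x ∈ F, α x := by
  rw [List.length_flatMap, ← aux_sum_toList F α]
  congr 1
  simp [Function.comp]

lemma aux_mem_flatMap {n : ℕ} (α : Fin n → ℕ) (F : Finset (Fin n)) (x : Fin n)
    (hx : x ∈ F.toList.flatMap fun y => List.replicate (α y) y) : x ∈ F := by
  rw [List.mem_flatMap] at hx
  obtain ⟨y, hy, hxy⟩ := hx
  rw [List.eq_of_mem_replicate hxy]
  exact Finset.mem_toList.mp hy

lemma aux_getElem_left {γ : Type*} (l1 l2 : List γ) (i : ℕ) (h : i < l1.length) :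
    ∀ (hi : i < (l1 ++ l2).length), (l1 ++ l2)[i] ∈ l1 := by
  intro hi
  rw [List.getElem_append_left h]
  exact List.getElem_mem h

lemma aux_getElem_mid {γ : Type*} (l1 l2 l3 l4 : List γ) (i : ℕ)
    (h1 : l1.length ≤ i) (h2 : l1.length + l2.length ≤ i)
    (h3 : i < l1.length + l2.length + l3.length) :
    ∀ (hi : i < (l1 ++ (l2 ++ (l3 ++ l4))).length), (l1 ++ (l2 ++ (l3 ++ l4)))[i] ∈ l3 := by
  intro hi
  rw [List.getElem_append_right h1]
  rw [List.getElem_append_right (by omega : l2.length ≤ i - l1.length)]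
  rw [List.getElem_append_left (by omega : i - l1.length - l2.length < l3.length)]
  exact List.getElem_mem _

theorem stmt7 (n i1 i2 t2 : ℕ) (hn : 3 ≤ n) (hi1a : 2 ≤ i1) (hi1b : i1 ≤ n - 2)
    (ht2a : n - i2 ≤ t2) (ht2b : t2 ≤ i1 - 1) (ht2c : 1 ≤ t2)
    (hcyc : n < i2 + t2) (hi2a : n - t2 ≤ i2) (hi2b : i2 ≤ n - 2)
    (C : Fin n → Set (Fin n))
    (hC : ∀ k : Fin n,
      C k = if k.val < n - i2 - 1 then
              {m : Fin n | ¬ (t2 ≤ m.val ∨ m.val < i2 + t2 - n)}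
            else if k.val < i1 ∨ k.val = n - 1 then (Set.univ : Set (Fin n))
            else {m : Fin n | i1 ≤ m.val}) :
    {α : Fin n → ℕ | ∃ j : Fin n → Fin n, (∀ k, j k ∈ C k) ∧ α = ∑ k, Pi.single (j k) 1} =
    {α : Fin n → ℕ | ∑ k, α k = n ∧
      ∑ k ∈ Finset.univ.filter (fun m : Fin n => m.val < i1), α k ≤ i1 + 1 ∧
      ∑ k ∈ Finset.univ.filter (fun m : Fin n => m.val < i2 + t2 - n ∨ t2 ≤ m.val), α k ≤ i2 + 1} := by
  classical
  ext α
  simp only [Set.mem_setOf_eq]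
  constructor
  · rintro ⟨j, hj, rfl⟩
    have happ : ∀ (m : Fin n), (∑ k, (Pi.single (j k) 1 : Fin n → ℕ)) m
        = ∑ k, if m = j k then 1 else 0 := by
      intro m
      rw [Finset.sum_apply m Finset.univ (fun k => (Pi.single (j k) 1 : Fin n → ℕ))]
      simp [Pi.single_apply]
    -- characterize j k membership
    have hjk : ∀ k : Fin n,
        (k.val < n - i2 - 1 → ¬ (t2 ≤ (j k).val ∨ (j k).val < i2 + t2 - n)) ∧
        (¬ (k.val < n - i2 - 1) → ¬ (k.val < i1 ∨ k.val = n - 1) → i1 ≤ (j k).val) := by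
      intro k
      have := hj k
      rw [hC k] at this
      constructor
      · intro hk
        rw [if_pos hk] at this
        exact this
      · intro hk1 hk2
        rw [if_neg hk1, if_neg hk2] at this
        exact this
    refine ⟨?_, ?_, ?_⟩
    · -- total sum = n
      have hone : ∀ k, (∑ m : Fin n, if m = j k then (1:ℕ) else 0) = 1 := by
        intro k
        simp
      calc ∑ m : Fin n, (∑ k, (Pi.single (j k) 1 : Fin n → ℕ)) m
          = ∑ m : Fin n, ∑ k : Fin n, if m = j k then (1:ℕ) else 0 := by
            simp only [happ]
        _ = ∑ k : Fin n, ∑ m : Fin n, if m = j k then (1:ℕ) else 0 := Finset.sum_comm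
        _ = ∑ k : Fin n, 1 := by simp only [hone]
        _ = n := by simp
    · -- first bound
      have step : ∀ (F : Finset (Fin n)),
          ∑ m ∈ F, (∑ k, (Pi.single (j k) 1 : Fin n → ℕ)) m
            = ∑ k : Fin n, if j k ∈ F then 1 else 0 := by
        intro F
        calc ∑ m ∈ F, (∑ k, (Pi.single (j k) 1 : Fin n → ℕ)) m
            = ∑ m ∈ F, ∑ k : Fin n, if m = j k then (1:ℕ) else 0 :=
              Finset.sum_congr rfl fun m _ => happ m
          _ = ∑ k : Fin n, ∑ m ∈ F, if m = j k then (1:ℕ) else 0 := Finset.sum_comm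
          _ = ∑ k : Fin n, if j k ∈ F then 1 else 0 := by
              refine Finset.sum_congr rfl fun k _ => ?_
              simp [Finset.sum_ite_eq']
      rw [step]
      have hb : ∀ k : Fin n,
          (if j k ∈ Finset.univ.filter (fun m : Fin n => m.val < i1) then (1:ℕ) else 0)
            ≤ if k.val < i1 ∨ k.val = n - 1 then 1 else 0 := by
        intro k
        by_cases hk : k.val < i1 ∨ k.val = n - 1
        · rw [if_pos hk]
          split <;> omega
        · rw [if_neg hk]
          by_cases hk1 : k.val < n - i2 - 1
          · exfalso; omega
          · have := (hjk k).2 hk1 hk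
            have hjF : j k ∉ Finset.univ.filter (fun m : Fin n => m.val < i1) := by
              simp only [Finset.mem_filter]
              push_neg
              intro _
              omega
            simp [hjF]
      calc ∑ k : Fin n, (if j k ∈ Finset.univ.filter (fun m : Fin n => m.val < i1)
              then (1:ℕ) else 0)
          ≤ ∑ k : Fin n, if k.val < i1 ∨ k.val = n - 1 then (1:ℕ) else 0 :=
            Finset.sum_le_sum fun k _ => hb k
        _ = ∑ x ∈ Finset.range n, if x < i1 ∨ x = n - 1 then (1:ℕ) else 0 :=
            Fin.sum_univ_eq_sum_range (fun x => if x < i1 ∨ x = n - 1 then (1:ℕ) else 0) n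
        _ = ((Finset.range n).filter (fun x => x < i1 ∨ x = n - 1)).card := by
            rw [Finset.card_filter]
        _ = i1 + 1 := by
            have hfe : (Finset.range n).filter (fun x => x < i1 ∨ x = n - 1)
                = insert (n-1) (Finset.range i1) := by
              ext x
              simp only [Finset.mem_filter, Finset.mem_range, Finset.mem_insert]
              omega
            rw [hfe, Finset.card_insert_of_notMem (by simp; omega), Finset.card_range]
    · -- second bound
      have step : ∀ (F : Finset (Fin n)),
          ∑ m ∈ F, (∑ k, (Pi.single (j k) 1 : Fin n → ℕ)) m
            = ∑ k : Fin n, if j k ∈ F then 1 else 0 := by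
        intro F
        calc ∑ m ∈ F, (∑ k, (Pi.single (j k) 1 : Fin n → ℕ)) m
            = ∑ m ∈ F, ∑ k : Fin n, if m = j k then (1:ℕ) else 0 :=
              Finset.sum_congr rfl fun m _ => happ m
          _ = ∑ k : Fin n, ∑ m ∈ F, if m = j k then (1:ℕ) else 0 := Finset.sum_comm
          _ = ∑ k : Fin n, if j k ∈ F then 1 else 0 := by
              refine Finset.sum_congr rfl fun k _ => ?_
              simp [Finset.sum_ite_eq']
      rw [step]
      have hb : ∀ k : Fin n,
          (if j k ∈ Finset.univ.filter
              (fun m : Fin n => m.val < i2 + t2 - n ∨ t2 ≤ m.val) then (1:ℕ) else 0)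
            ≤ if ¬ (k.val < n - i2 - 1) then 1 else 0 := by
        intro k
        by_cases hk : k.val < n - i2 - 1
        · have := (hjk k).1 hk
          have hjF : j k ∉ Finset.univ.filter
              (fun m : Fin n => m.val < i2 + t2 - n ∨ t2 ≤ m.val) := by
            simp only [Finset.mem_filter]
            push_neg
            intro _
            omega
          rw [if_neg hjF, if_neg (by omega : ¬ ¬ (k.val < n - i2 - 1))]
        · rw [if_pos hk]
          split <;> omega
      calc ∑ k : Fin n, (if j k ∈ Finset.univ.filter
              (fun m : Fin n => m.val < i2 + t2 - n ∨ t2 ≤ m.val) then (1:ℕ) else 0)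
          ≤ ∑ k : Fin n, if ¬ (k.val < n - i2 - 1) then (1:ℕ) else 0 :=
            Finset.sum_le_sum fun k _ => hb k
        _ = ∑ x ∈ Finset.range n, if ¬ (x < n - i2 - 1) then (1:ℕ) else 0 :=
            Fin.sum_univ_eq_sum_range (fun x => if ¬ (x < n - i2 - 1) then (1:ℕ) else 0) n
        _ = ((Finset.range n).filter (fun x => ¬ (x < n - i2 - 1))).card := by
            rw [Finset.card_filter]
        _ = i2 + 1 := by
            have hfe : (Finset.range n).filter (fun x => ¬ (x < n - i2 - 1))
                = Finset.Ico (n - i2 - 1) n := by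
              ext x
              simp only [Finset.mem_filter, Finset.mem_range, Finset.mem_Ico]
              omega
            rw [hfe, Nat.card_Ico]
            omega
  · rintro ⟨hsum, h1, h2⟩
    set p := n - i2 - 1 with hp
    set r := n - 1 - i1 with hr
    set u := i1 - p with hu
    set FA : Finset (Fin n) :=
      Finset.univ.filter (fun m => ¬ (t2 ≤ m.val ∨ m.val < i2 + t2 - n)) with hFA
    set FB : Finset (Fin n) := Finset.univ.filter (fun m => i1 ≤ m.val) with hFB
    set FM : Finset (Fin n) :=
      Finset.univ.filter (fun m => (t2 ≤ m.val ∨ m.val < i2 + t2 - n) ∧ m.val < i1) with hFM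
    set LA := FA.toList.flatMap (fun x => List.replicate (α x) x) with hLA
    set LM := FM.toList.flatMap (fun x => List.replicate (α x) x) with hLM
    set LB := FB.toList.flatMap (fun x => List.replicate (α x) x) with hLB
    have lenA : LA.length = ∑ x ∈ FA, α x := aux_len_flatMap α FA
    have lenM : LM.length = ∑ x ∈ FM, α x := aux_len_flatMap α FM
    have lenB : LB.length = ∑ x ∈ FB, α x := aux_len_flatMap α FB
    have sum_filter_eq : ∀ (P Q : Fin n → Prop) [DecidablePred P] [DecidablePred Q],
        (∀ m : Fin n, P m ↔ Q m) →
        ∑ x ∈ Finset.univ.filter P, α x = ∑ x ∈ Finset.univ.filter Q, α x := by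
      intro P Q _ _ h
      congr 1
      apply Finset.filter_congr
      intro m _
      first
        | exact h m
        | simp only [eq_iff_iff]; exact h m
    have hsplit2 : ∑ x ∈ FA, α x
        + ∑ k ∈ Finset.univ.filter (fun m : Fin n => m.val < i2 + t2 - n ∨ t2 ≤ m.val), α k
        = n := by
      have e := Finset.sum_filter_add_sum_filter_not Finset.univ
        (fun m : Fin n => ¬ (t2 ≤ m.val ∨ m.val < i2 + t2 - n)) α
      rw [hsum] at e
      rw [hFA, sum_filter_eq (fun m : Fin n => m.val < i2 + t2 - n ∨ t2 ≤ m.val)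
        (fun m : Fin n => ¬ ¬ (t2 ≤ m.val ∨ m.val < i2 + t2 - n)) (by intro m; tauto)]
      exact e
    have hsplit1 : ∑ k ∈ Finset.univ.filter (fun m : Fin n => m.val < i1), α k
        + ∑ x ∈ FB, α x = n := by
      have e := Finset.sum_filter_add_sum_filter_not Finset.univ
        (fun m : Fin n => m.val < i1) α
      rw [hsum] at e
      rw [hFB, sum_filter_eq (fun m : Fin n => i1 ≤ m.val)
        (fun m : Fin n => ¬ (m.val < i1)) (by intro m; omega)]
      exact e
    have hap : p ≤ LA.length := by omega
    have hrb : r ≤ LB.length := by omega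
    -- three-way partition of the total
    have htot : LA.length + LM.length + LB.length = n := by
      rw [lenA, lenM, lenB]
      have e3 := Finset.sum_filter_add_sum_filter_not
        (Finset.univ.filter (fun m : Fin n => m.val < i2 + t2 - n ∨ t2 ≤ m.val))
        (fun m : Fin n => m.val < i1) α
      rw [Finset.filter_filter, Finset.filter_filter] at e3
      have hMeq : ∑ x ∈ Finset.univ.filter
            (fun a : Fin n => (a.val < i2 + t2 - n ∨ t2 ≤ a.val) ∧ a.val < i1), α x
          = ∑ x ∈ FM, α x := by
        rw [hFM]
        exact sum_filter_eq _ _ (by intro m; tauto)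
      have hBeq : ∑ x ∈ Finset.univ.filter
            (fun a : Fin n => (a.val < i2 + t2 - n ∨ t2 ≤ a.val) ∧ ¬ a.val < i1), α x
          = ∑ x ∈ FB, α x := by
        rw [hFB]
        refine sum_filter_eq _ _ ?_
        intro m
        constructor
        · rintro ⟨-, h⟩
          omega
        · intro h
          exact ⟨Or.inr (by omega), by omega⟩
      rw [hMeq, hBeq] at e3
      omega
    set Z := LA.drop p ++ (LM ++ LB.drop r) with hZ
    have hZlen : Z.length = u + 1 := by
      rw [hZ]
      simp only [List.length_append, List.length_drop]
      omega
    set L' := LA.take p ++ (Z.take u ++ (LB.take r ++ Z.drop u)) with hL'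
    have htp : (LA.take p).length = p := by rw [List.length_take]; omega
    have htu : (Z.take u).length = u := by rw [List.length_take]; omega
    have htr : (LB.take r).length = r := by rw [List.length_take]; omega
    have hlen : L'.length = n := by
      rw [hL']
      simp only [List.length_append, List.length_take, List.length_drop]
      omega
    have hlen2 : (LA.take p ++ (Z.take u ++ (LB.take r ++ Z.drop u))).length = n := by
      rw [← hL']
      exact hlen
    -- counting
    have hcount : ∀ m : Fin n, L'.count m = α m := by
      intro m
      have hsplitcount : ∀ (l : List (Fin n)) (i : ℕ),
          (l.take i).count m + (l.drop i).count m = l.count m := by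
        intro l i
        rw [← List.count_append, List.take_append_drop]
      have cA : LA.count m = if m ∈ FA then α m else 0 := by
        rw [hLA, aux_count_flatMap α m FA.toList FA.nodup_toList]
        simp [Finset.mem_toList]
      have cM : LM.count m = if m ∈ FM then α m else 0 := by
        rw [hLM, aux_count_flatMap α m FM.toList FM.nodup_toList]
        simp [Finset.mem_toList]
      have cB : LB.count m = if m ∈ FB then α m else 0 := by
        rw [hLB, aux_count_flatMap α m FB.toList FB.nodup_toList]
        simp [Finset.mem_toList]
      have hZcount : Z.count m = (LA.drop p).count m + LM.count m + (LB.drop r).count m := by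
        rw [hZ]
        simp [List.count_append]
        omega
      have htotal : L'.count m = LA.count m + LM.count m + LB.count m := by
        rw [hL']
        simp only [List.count_append]
        have := hsplitcount LA p
        have := hsplitcount LB r
        have := hsplitcount Z u
        omega
      rw [htotal, cA, cM, cB]
      have hone : (m ∈ FA ∧ m ∉ FM ∧ m ∉ FB) ∨ (m ∉ FA ∧ m ∈ FM ∧ m ∉ FB)
          ∨ (m ∉ FA ∧ m ∉ FM ∧ m ∈ FB) := by
        rw [hFA, hFM, hFB]
        simp only [Finset.mem_filter, Finset.mem_univ, true_and]
        have := m.isLt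
        by_cases h1 : t2 ≤ m.val ∨ m.val < i2 + t2 - n
        · by_cases h2 : m.val < i1
          · right; left
            refine ⟨by tauto, ⟨h1, h2⟩, by omega⟩
          · right; right
            refine ⟨by tauto, by tauto, by omega⟩
        · left
          refine ⟨h1, by tauto, by omega⟩
      rcases hone with ⟨ha, hb', hc⟩ | ⟨ha, hb', hc⟩ | ⟨ha, hb', hc⟩ <;>
        simp [ha, hb', hc]
    -- membership properties of the blocks
    have hmemA : ∀ x ∈ LA, ¬ (t2 ≤ x.val ∨ x.val < i2 + t2 - n) := by
      intro x hx
      have := aux_mem_flatMap α FA x hx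
      rw [hFA, Finset.mem_filter] at this
      exact this.2
    have hmemB : ∀ x ∈ LB, i1 ≤ x.val := by
      intro x hx
      have := aux_mem_flatMap α FB x hx
      rw [hFB, Finset.mem_filter] at this
      exact this.2
    refine ⟨fun k => L'.get (Fin.cast hlen.symm k), ?_, ?_⟩
    · intro k
      rw [hC k]
      have hkn : (k : ℕ) < n := k.isLt
      have hki : k.val < (LA.take p ++ (Z.take u ++ (LB.take r ++ Z.drop u))).length := by
        rw [hlen2]
        omega
      have he : L'.get (Fin.cast hlen.symm k)
          = (LA.take p ++ (Z.take u ++ (LB.take r ++ Z.drop u)))[k.val]'hki := by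
        simp only [List.get_eq_getElem, hL']
        rfl
      by_cases hk1 : k.val < n - i2 - 1
      · rw [if_pos hk1]
        have hklt : k.val < (LA.take p).length := by omega
        have hmem : (LA.take p ++ (Z.take u ++ (LB.take r ++ Z.drop u)))[k.val]'hki
            ∈ LA.take p := aux_getElem_left _ _ _ hklt hki
        refine hmemA _ (List.mem_of_mem_take (i := p) ?_)
        show L'.get (Fin.cast hlen.symm k) ∈ LA.take p
        rw [he]
        exact hmem
      · rw [if_neg hk1]
        by_cases hk2 : k.val < i1 ∨ k.val = n - 1
        · rw [if_pos hk2]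
          trivial
        · rw [if_neg hk2]
          push_neg at hk2
          have hge : i1 ≤ k.val := by omega
          have hlt : k.val < n - 1 := by omega
          have hmem : (LA.take p ++ (Z.take u ++ (LB.take r ++ Z.drop u)))[k.val]'hki
              ∈ LB.take r :=
            aux_getElem_mid (LA.take p) (Z.take u) (LB.take r) (Z.drop u) k.val
              (by omega) (by omega) (by omega) hki
          refine hmemB _ (List.mem_of_mem_take (i := r) ?_)
          show L'.get (Fin.cast hlen.symm k) ∈ LB.take r
          rw [he]
          exact hmem
    · funext m
      have key : (∑ k : Fin n, (Pi.single (L'.get (Fin.cast hlen.symm k)) 1 : Fin n → ℕ)) m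
          = L'.count m := by
        rw [Finset.sum_apply m Finset.univ
          (fun k => (Pi.single (L'.get (Fin.cast hlen.symm k)) 1 : Fin n → ℕ))]
        have e0 : ∑ k : Fin n, (Pi.single (L'.get (Fin.cast hlen.symm k)) 1 : Fin n → ℕ) m
            = ∑ i : Fin L'.length, (Pi.single (L'.get i) 1 : Fin n → ℕ) m :=
          Equiv.sum_comp (finCongr hlen.symm)
            (fun i => (Pi.single (L'.get i) 1 : Fin n → ℕ) m)
        rw [e0, ← List.sum_ofFn]
        have e1 : (List.ofFn fun i : Fin L'.length => (Pi.single (L'.get i) 1 : Fin n → ℕ) m)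
            = L'.map (fun x => (Pi.single x 1 : Fin n → ℕ) m) := by
          conv_rhs => rw [← List.ofFn_getElem (xs := L')]
          rw [List.map_ofFn]
          rfl
        rw [e1]
        have e2 : L'.map (fun x => (Pi.single x 1 : Fin n → ℕ) m)
            = L'.map (fun x => if m = x then (1:ℕ) else 0) := by
          apply List.map_congr_left
          intro x _
          rw [Pi.single_apply]
        rw [e2, aux_sum_map_ite]
      rw [← hcount m]
      exact (key).symm
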